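/- Let C, θ : ℝ → (0,∞) be continuously differentiable with C(x) ≥ m_C > 0 and 0 < θ(x) ≤ M_θ for all x, and with L = sup_x |(1/θ)′(x)| < ∞. For ε > 0, Ω > 0 and 0 ≤ a < b, define Z = (2i/((b−a)ε)) ∫_a^b e^{−iΩη} ∫₀^η (sin(Ωξ)/C(ξ)) · exp( −(1/ε)∫_ξ^η dσ/θ(σ) ) dξ dη and Z¹ = (2i/((b−a)ε)) ∫_a^b e^{−iΩη} ∫₀^η (sin(Ωξ)/C(ξ)) · exp( −(η−ξ)/(εθ(η)) ) dξ dη. Then |Z − Z¹| ≤ 2 ε M_θ³ L / m_C. -/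

import Mathlib

open Real Complex MeasureTheory intervalIntegral

lemma SDaux_exp_sub_exp {A B m : ℝ} (hA : m ≤ A) (hB : m ≤ B) :
    |Real.exp (-A) - Real.exp (-B)| ≤ |A - B| * Real.exp (-m) := by
  wlog h : A ≤ B generalizing A B
  · rw [abs_sub_comm, abs_sub_comm A B]; exact this hB hA (le_of_not_ge h)
  have h1 : Real.exp (-B) ≤ Real.exp (-A) := Real.exp_le_exp.2 (by linarith)
  have h2 : Real.exp (A - B) ≤ 1 := Real.exp_le_one_iff.2 (by linarith)
  have h3 : A - B + 1 ≤ Real.exp (A - B) := Real.add_one_le_exp _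
  have key : Real.exp (-A) - Real.exp (-B) = Real.exp (-A) * (1 - Real.exp (A - B)) := by
    rw [mul_sub, mul_one, ← Real.exp_add]; ring_nf
  rw [_root_.abs_of_nonneg (by linarith : (0:ℝ) ≤ Real.exp (-A) - Real.exp (-B)), _root_.abs_of_nonpos (by linarith : A - B ≤ 0), key]
  have hAm : Real.exp (-A) ≤ Real.exp (-m) := Real.exp_le_exp.2 (by linarith)
  calc Real.exp (-A) * (1 - Real.exp (A - B)) ≤ Real.exp (-m) * (B - A) :=
        mul_le_mul hAm (by linarith) (by linarith) (Real.exp_nonneg _)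
    _ = -(A - B) * Real.exp (-m) := by ring

lemma SDaux_integral_sq_exp_le {k : ℝ} (hk : 0 < k) {η : ℝ} (hη : 0 ≤ η) :
    ∫ t in (0:ℝ)..η, t ^ 2 * Real.exp (-t / k) ≤ 2 * k ^ 3 := by
  set F : ℝ → ℝ := fun t => -(k * t ^ 2 + 2 * k ^ 2 * t + 2 * k ^ 3) * Real.exp (-t / k) with hFdef
  have hF : ∀ t : ℝ, HasDerivAt F (t ^ 2 * Real.exp (-t / k)) t := by
    intro t
    have hP : HasDerivAt (fun t : ℝ => -(k * t ^ 2 + 2 * k ^ 2 * t + 2 * k ^ 3))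
        (-(k * (2 * t ^ (2-1)) + 2 * k ^ 2 * 1)) t := by
      have := (((hasDerivAt_pow 2 t).const_mul k).add
        (((hasDerivAt_id t).const_mul (2 * k ^ 2)).add_const (2 * k ^ 3))).neg
      convert this using 1
      · rfl
      · rfl
      · funext x; simp; ring
      · norm_num
    have hlin : HasDerivAt (fun t : ℝ => -t / k) (-1 / k) t := (hasDerivAt_id t).neg.div_const k
    have hE : HasDerivAt (fun t : ℝ => Real.exp (-t / k)) (Real.exp (-t / k) * (-1 / k)) t :=
      hlin.exp
    have := hP.mul hE
    convert this using 1
    · rfl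
    · rfl
    · rfl
    have hk' : k ≠ 0 := hk.ne'
    field_simp
    ring
  have hcont : Continuous fun t : ℝ => t ^ 2 * Real.exp (-t / k) := by continuity
  rw [intervalIntegral.integral_eq_sub_of_hasDerivAt (fun t _ => hF t)
    (hcont.intervalIntegrable 0 η)]
  have h0 : F 0 = -(2 * k ^ 3) := by simp [hFdef]
  have hFη : F η ≤ 0 := by
    have : 0 ≤ (k * η ^ 2 + 2 * k ^ 2 * η + 2 * k ^ 3) := by positivity
    have he : 0 < Real.exp (-η / k) := Real.exp_pos _
    simp only [hFdef]
    nlinarith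
  rw [h0]
  linarith

lemma SDaux_lip (θ : ℝ → ℝ) (hθC1 : ContDiff ℝ 1 θ) (hθpos : ∀ x, 0 < θ x)
    (L : ℝ) (hL : ∀ x, |deriv (fun y => 1 / θ y) x| ≤ L) (x y : ℝ) :
    |1 / θ x - 1 / θ y| ≤ L * |x - y| := by
  have hd : Differentiable ℝ (fun y => 1 / θ y) := by
    simp only [one_div]
    exact (hθC1.differentiable one_ne_zero).inv (fun x => (hθpos x).ne')
  have h := Convex.norm_image_sub_le_of_norm_deriv_le (s := Set.univ)
    (fun z _ => hd z) (fun z _ => (hL z).trans_eq' (Real.norm_eq_abs _))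
    convex_univ (Set.mem_univ y) (Set.mem_univ x)
  simpa [Real.norm_eq_abs] using h

lemma SDaux_inner (C θ : ℝ → ℝ) (hCcont : Continuous C) (hθC1 : ContDiff ℝ 1 θ)
    (hCpos : ∀ x, 0 < C x) (hθpos : ∀ x, 0 < θ x)
    (mC : ℝ) (hmC : 0 < mC) (hmC' : ∀ x, mC ≤ C x)
    (Mθ : ℝ) (hMθ : ∀ x, θ x ≤ Mθ)
    (L : ℝ) (hL : ∀ x, |deriv (fun y => 1 / θ y) x| ≤ L)
    (ε Ω : ℝ) (hε : 0 < ε)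
    (η : ℝ) (hη : 0 ≤ η) :
    |(∫ ξ in (0:ℝ)..η, Real.sin (Ω * ξ) / C ξ *
        Real.exp (-(1 / ε) * ∫ σ in ξ..η, 1 / θ σ)) -
      ∫ ξ in (0:ℝ)..η, Real.sin (Ω * ξ) / C ξ *
        Real.exp (-(η - ξ) / (ε * θ η))| ≤ L * ε ^ 2 * Mθ ^ 3 / mC := by
  have hMθpos : 0 < Mθ := (hθpos 0).trans_le (hMθ 0)
  have hL0 : 0 ≤ L := (abs_nonneg _).trans (hL 0)
  set k : ℝ := ε * Mθ with hkdef
  have hk : 0 < k := mul_pos hε hMθpos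
  have hθcont : Continuous θ := hθC1.continuous
  have hinv : Continuous fun σ => 1 / θ σ :=
    continuous_const.div hθcont fun x => (hθpos x).ne'
  have hinvint : ∀ u v : ℝ, IntervalIntegrable (fun σ => 1 / θ σ) volume u v :=
    fun u v => hinv.intervalIntegrable u v
  have hGcont : Continuous fun t => ∫ σ in (0:ℝ)..t, 1 / θ σ :=
    intervalIntegral.continuous_primitive hinvint 0
  set G : ℝ → ℝ := fun t => ∫ σ in (0:ℝ)..t, 1 / θ σ with hGdef
  have hGsub : ∀ ξ η : ℝ, (∫ σ in ξ..η, 1 / θ σ) = G η - G ξ := by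
    intro ξ η
    have h := intervalIntegral.integral_add_adjacent_intervals (hinvint 0 ξ) (hinvint ξ η)
    show (∫ σ in ξ..η, 1 / θ σ) =
      (∫ σ in (0:ℝ)..η, 1 / θ σ) - ∫ σ in (0:ℝ)..ξ, 1 / θ σ
    linarith
  -- rewrite the first inner integral using G
  have hrw : (∫ ξ in (0:ℝ)..η, Real.sin (Ω * ξ) / C ξ *
      Real.exp (-(1 / ε) * ∫ σ in ξ..η, 1 / θ σ)) =
      ∫ ξ in (0:ℝ)..η, Real.sin (Ω * ξ) / C ξ * Real.exp (-(1 / ε) * (G η - G ξ)) := by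
    apply intervalIntegral.integral_congr
    intro ξ _
    simp only [hGsub]
  rw [hrw]
  -- continuity of the two inner integrands in ξ
  have hsinC : Continuous fun ξ => Real.sin (Ω * ξ) / C ξ :=
    (Real.continuous_sin.comp (continuous_const.mul continuous_id)).div hCcont
      fun x => (hCpos x).ne'
  have hf1 : Continuous fun ξ => Real.sin (Ω * ξ) / C ξ *
      Real.exp (-(1 / ε) * (G η - G ξ)) :=
    hsinC.mul (Real.continuous_exp.comp
      (continuous_const.mul ((continuous_const.sub hGcont))))
  have hg1 : Continuous fun ξ => Real.sin (Ω * ξ) / C ξ *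
      Real.exp (-(η - ξ) / (ε * θ η)) :=
    hsinC.mul (Real.continuous_exp.comp
      (((continuous_const.sub continuous_id).neg).div_const _))
  rw [← intervalIntegral.integral_sub (hf1.intervalIntegrable 0 η)
    (hg1.intervalIntegrable 0 η)]
  have hbndcont : Continuous fun ξ =>
      L / (2 * ε * mC) * ((η - ξ) ^ 2 * Real.exp (-(η - ξ) / k)) :=
    continuous_const.mul (((continuous_const.sub continuous_id).pow 2).mul
      (Real.continuous_exp.comp ((continuous_const.sub continuous_id).neg.div_const _)))
  -- pointwise bound
  have hpt : ∀ ξ ∈ Set.Icc 0 η,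
      |Real.sin (Ω * ξ) / C ξ * Real.exp (-(1 / ε) * (G η - G ξ)) -
        Real.sin (Ω * ξ) / C ξ * Real.exp (-(η - ξ) / (ε * θ η))| ≤
      L / (2 * ε * mC) * ((η - ξ) ^ 2 * Real.exp (-(η - ξ) / k)) := by
    rintro ξ ⟨hξ0, hξη⟩
    set A : ℝ := (1 / ε) * (G η - G ξ) with hAdef
    set B : ℝ := (η - ξ) / (ε * θ η) with hBdef
    set m : ℝ := (η - ξ) / k with hmdef
    have hsub : Real.sin (Ω * ξ) / C ξ * Real.exp (-(1 / ε) * (G η - G ξ)) -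
        Real.sin (Ω * ξ) / C ξ * Real.exp (-(η - ξ) / (ε * θ η)) =
        Real.sin (Ω * ξ) / C ξ * (Real.exp (-A) - Real.exp (-B)) := by
      have e1 : -(1 / ε) * (G η - G ξ) = -A := by rw [hAdef]; ring
      have e2 : -(η - ξ) / (ε * θ η) = -B := by rw [hBdef]; ring
      rw [e1, e2, mul_sub]
    -- lower bounds on A and B
    have hθη : 0 < θ η := hθpos η
    have hmA : m ≤ A := by
      have hge : (η - ξ) * (1 / Mθ) ≤ G η - G ξ := by
        rw [← hGsub]
        have h1 : (∫ σ in ξ..η, (1 / Mθ : ℝ)) ≤ ∫ σ in ξ..η, 1 / θ σ :=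
          intervalIntegral.integral_mono_on hξη
            (intervalIntegrable_const) (hinvint ξ η)
            (fun σ _ => one_div_le_one_div_of_le (hθpos σ) (hMθ σ))
        simpa [smul_eq_mul] using h1
      have : m = (1 / ε) * ((η - ξ) * (1 / Mθ)) := by
        rw [hmdef, hkdef]; field_simp
      rw [this, hAdef]
      exact mul_le_mul_of_nonneg_left hge (by positivity)
    have hmB : m ≤ B := by
      rw [hmdef, hBdef, hkdef]
      gcongr
      exact hMθ η
    -- |A - B| bound
    have hAB : |A - B| ≤ L * (η - ξ) ^ 2 / (2 * ε) := by
      have e1 : (∫ σ in ξ..η, (1 / θ σ - 1 / θ η)) =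
          (G η - G ξ) - (η - ξ) * (1 / θ η) := by
        rw [intervalIntegral.integral_sub (hinvint ξ η) intervalIntegrable_const,
          hGsub]
        simp [smul_eq_mul]
      have e2 : (∫ σ in ξ..η, (η - σ)) = (η - ξ) ^ 2 / 2 := by
        rw [intervalIntegral.integral_sub intervalIntegrable_const
          intervalIntegrable_id]
        simp [smul_eq_mul, integral_id]
        ring
      have key : |(G η - G ξ) - (η - ξ) * (1 / θ η)| ≤ L * ((η - ξ) ^ 2 / 2) := by
        rw [← e1]
        calc |∫ σ in ξ..η, (1 / θ σ - 1 / θ η)|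
            ≤ ∫ σ in ξ..η, |1 / θ σ - 1 / θ η| :=
              intervalIntegral.abs_integral_le_integral_abs hξη
          _ ≤ ∫ σ in ξ..η, L * (η - σ) := by
              apply intervalIntegral.integral_mono_on hξη
                ((hinv.sub continuous_const).abs.intervalIntegrable ξ η)
                ((continuous_const.mul (continuous_const.sub continuous_id)).intervalIntegrable ξ η)
              rintro σ ⟨hσ1, hσ2⟩
              have h1 := SDaux_lip θ hθC1 hθpos L hL σ η
              have h2 : |σ - η| = η - σ := by
                rw [abs_of_nonpos (by linarith : σ - η ≤ 0), neg_sub]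
              rw [h2] at h1
              simpa using h1
          _ = L * ((η - ξ) ^ 2 / 2) := by
              rw [intervalIntegral.integral_const_mul, e2]
      have hX : A - B = (1 / ε) * ((G η - G ξ) - (η - ξ) * (1 / θ η)) := by
        rw [hAdef, hBdef]
        have hθη' : θ η ≠ 0 := hθη.ne'
        field_simp
      rw [hX, abs_mul, abs_of_pos (by positivity : (0:ℝ) < 1 / ε)]
      calc (1 / ε) * |(G η - G ξ) - (η - ξ) * (1 / θ η)|
          ≤ (1 / ε) * (L * ((η - ξ) ^ 2 / 2)) :=
            mul_le_mul_of_nonneg_left key (by positivity)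
        _ = L * (η - ξ) ^ 2 / (2 * ε) := by ring
    -- assemble
    rw [hsub, abs_mul]
    have hsin : |Real.sin (Ω * ξ) / C ξ| ≤ 1 / mC := by
      rw [abs_div, abs_of_pos (hCpos ξ)]
      exact div_le_div₀ zero_le_one (abs_le.2 ⟨Real.neg_one_le_sin _, Real.sin_le_one _⟩) hmC (hmC' ξ)
    have hexp := SDaux_exp_sub_exp hmA hmB
    have hexp2 : |Real.exp (-A) - Real.exp (-B)| ≤
        L * (η - ξ) ^ 2 / (2 * ε) * Real.exp (-(η - ξ) / k) := by
      calc |Real.exp (-A) - Real.exp (-B)| ≤ |A - B| * Real.exp (-m) := hexp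
        _ ≤ L * (η - ξ) ^ 2 / (2 * ε) * Real.exp (-m) :=
            mul_le_mul_of_nonneg_right hAB (Real.exp_nonneg _)
        _ = L * (η - ξ) ^ 2 / (2 * ε) * Real.exp (-(η - ξ) / k) := by
            rw [hmdef, neg_div]
    calc |Real.sin (Ω * ξ) / C ξ| * |Real.exp (-A) - Real.exp (-B)|
        ≤ (1 / mC) * (L * (η - ξ) ^ 2 / (2 * ε) * Real.exp (-(η - ξ) / k)) := by
          apply mul_le_mul hsin hexp2 (abs_nonneg _) (by positivity)
      _ = L / (2 * ε * mC) * ((η - ξ) ^ 2 * Real.exp (-(η - ξ) / k)) := by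
          field_simp
  -- integrate the bound
  calc |∫ ξ in (0:ℝ)..η, (Real.sin (Ω * ξ) / C ξ * Real.exp (-(1 / ε) * (G η - G ξ)) -
        Real.sin (Ω * ξ) / C ξ * Real.exp (-(η - ξ) / (ε * θ η)))|
      ≤ ∫ ξ in (0:ℝ)..η, |Real.sin (Ω * ξ) / C ξ * Real.exp (-(1 / ε) * (G η - G ξ)) -
        Real.sin (Ω * ξ) / C ξ * Real.exp (-(η - ξ) / (ε * θ η))| :=
        intervalIntegral.abs_integral_le_integral_abs hη
    _ ≤ ∫ ξ in (0:ℝ)..η, L / (2 * ε * mC) * ((η - ξ) ^ 2 * Real.exp (-(η - ξ) / k)) :=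
        intervalIntegral.integral_mono_on hη
          ((hf1.sub hg1).abs.intervalIntegrable 0 η)
          (hbndcont.intervalIntegrable 0 η) hpt
    _ = L / (2 * ε * mC) * ∫ ξ in (0:ℝ)..η, (η - ξ) ^ 2 * Real.exp (-(η - ξ) / k) :=
        intervalIntegral.integral_const_mul _ _
    _ = L / (2 * ε * mC) * ∫ t in (0:ℝ)..η, t ^ 2 * Real.exp (-t / k) := by
        congr 1
        have h := intervalIntegral.integral_comp_sub_left
          (a := (0:ℝ)) (b := η) (fun t => t ^ 2 * Real.exp (-t / k)) η
        simpa using h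
    _ ≤ L / (2 * ε * mC) * (2 * k ^ 3) :=
        mul_le_mul_of_nonneg_left (SDaux_integral_sq_exp_le hk hη) (by positivity)
    _ = L * ε ^ 2 * Mθ ^ 3 / mC := by
        rw [hkdef]; field_simp

/-- **First approximation step in the slow-drift asymptotics:** replacing the exact
relaxation kernel by its frozen-coefficient approximation changes the rescaled
measured impedance by at most `2 ε M_θ³ L / m_C`. -/
theorem slow_drift_first_approximation
    (C θ : ℝ → ℝ) (hCC1 : ContDiff ℝ 1 C) (hθC1 : ContDiff ℝ 1 θ)
    (hCpos : ∀ x, 0 < C x) (hθpos : ∀ x, 0 < θ x)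
    (mC : ℝ) (hmC : 0 < mC) (hmC' : ∀ x, mC ≤ C x)
    (Mθ : ℝ) (hMθ : ∀ x, θ x ≤ Mθ)
    (L : ℝ) (hL : ∀ x, |deriv (fun y => 1 / θ y) x| ≤ L)
    (ε Ω : ℝ) (hε : 0 < ε) (hΩ : 0 < Ω)
    (a b : ℝ) (ha : 0 ≤ a) (hab : a < b)
    (Z Z₁ : ℂ)
    (hZ : Z = 2 * Complex.I / (((b : ℂ) - a) * ε) *
      ∫ η in a..b, Complex.exp (-Complex.I * Ω * η) *
        ((∫ ξ in (0 : ℝ)..η, Real.sin (Ω * ξ) / C ξ *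
          Real.exp (-(1 / ε) * ∫ σ in ξ..η, 1 / θ σ) : ℝ) : ℂ))
    (hZ₁ : Z₁ = 2 * Complex.I / (((b : ℂ) - a) * ε) *
      ∫ η in a..b, Complex.exp (-Complex.I * Ω * η) *
        ((∫ ξ in (0 : ℝ)..η, Real.sin (Ω * ξ) / C ξ *
          Real.exp (-(η - ξ) / (ε * θ η)) : ℝ) : ℂ)) :
    ‖Z - Z₁‖ ≤ 2 * ε * Mθ ^ 3 * L / mC := by
  have hMθpos : 0 < Mθ := (hθpos 0).trans_le (hMθ 0)
  have hL0 : 0 ≤ L := (abs_nonneg _).trans (hL 0)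
  have hba : 0 < b - a := sub_pos.2 hab
  have hθcont : Continuous θ := hθC1.continuous
  have hCcont : Continuous C := hCC1.continuous
  have hinv : Continuous fun σ => 1 / θ σ :=
    continuous_const.div hθcont fun x => (hθpos x).ne'
  have hinvint : ∀ u v : ℝ, IntervalIntegrable (fun σ => 1 / θ σ) volume u v :=
    fun u v => hinv.intervalIntegrable u v
  have hGcont : Continuous fun t => ∫ σ in (0:ℝ)..t, 1 / θ σ :=
    intervalIntegral.continuous_primitive hinvint 0
  set G : ℝ → ℝ := fun t => ∫ σ in (0:ℝ)..t, 1 / θ σ with hGdef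
  have hGsub : ∀ ξ η : ℝ, (∫ σ in ξ..η, 1 / θ σ) = G η - G ξ := by
    intro ξ η
    have h := intervalIntegral.integral_add_adjacent_intervals (hinvint 0 ξ) (hinvint ξ η)
    show (∫ σ in ξ..η, 1 / θ σ) =
      (∫ σ in (0:ℝ)..η, 1 / θ σ) - ∫ σ in (0:ℝ)..ξ, 1 / θ σ
    linarith
  -- continuity of the inner integrals as functions of η
  have huncf : Continuous (Function.uncurry fun η ξ =>
      Real.sin (Ω * ξ) / C ξ * Real.exp (-(1 / ε) * (G η - G ξ))) := by
    show Continuous fun p : ℝ × ℝ =>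
      Real.sin (Ω * p.2) / C p.2 * Real.exp (-(1 / ε) * (G p.1 - G p.2))
    exact ((Real.continuous_sin.comp (continuous_const.mul continuous_snd)).div
        (hCcont.comp continuous_snd) fun p => (hCpos p.2).ne').mul
      (Real.continuous_exp.comp (continuous_const.mul
        ((hGcont.comp continuous_fst).sub (hGcont.comp continuous_snd))))
  have huncg : Continuous (Function.uncurry fun η ξ =>
      Real.sin (Ω * ξ) / C ξ * Real.exp (-(η - ξ) / (ε * θ η))) := by
    show Continuous fun p : ℝ × ℝ =>
      Real.sin (Ω * p.2) / C p.2 * Real.exp (-(p.1 - p.2) / (ε * θ p.1))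
    exact ((Real.continuous_sin.comp (continuous_const.mul continuous_snd)).div
        (hCcont.comp continuous_snd) fun p => (hCpos p.2).ne').mul
      (Real.continuous_exp.comp (((continuous_fst.sub continuous_snd).neg).div
        (continuous_const.mul (hθcont.comp continuous_fst))
        fun p => (mul_pos hε (hθpos p.1)).ne'))
  have hI1cont : Continuous fun η : ℝ => ∫ ξ in (0:ℝ)..η,
      Real.sin (Ω * ξ) / C ξ * Real.exp (-(1 / ε) * (G η - G ξ)) :=
    intervalIntegral.continuous_parametric_intervalIntegral_of_continuous huncf continuous_id
  have hI2cont : Continuous fun η : ℝ => ∫ ξ in (0:ℝ)..η,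
      Real.sin (Ω * ξ) / C ξ * Real.exp (-(η - ξ) / (ε * θ η)) :=
    intervalIntegral.continuous_parametric_intervalIntegral_of_continuous huncg continuous_id
  have hIeq : (fun η : ℝ => ∫ ξ in (0:ℝ)..η, Real.sin (Ω * ξ) / C ξ *
      Real.exp (-(1 / ε) * ∫ σ in ξ..η, 1 / θ σ)) = fun η : ℝ => ∫ ξ in (0:ℝ)..η,
      Real.sin (Ω * ξ) / C ξ * Real.exp (-(1 / ε) * (G η - G ξ)) := by
    funext η
    exact intervalIntegral.integral_congr fun ξ _ => by simp only [hGsub]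
  have hIcont : Continuous fun η : ℝ => ∫ ξ in (0:ℝ)..η, Real.sin (Ω * ξ) / C ξ *
      Real.exp (-(1 / ε) * ∫ σ in ξ..η, 1 / θ σ) := by
    rw [hIeq]; exact hI1cont
  -- outer integrands
  have hexpcont : Continuous fun η : ℝ => Complex.exp (-Complex.I * Ω * η) :=
    Complex.continuous_exp.comp (continuous_const.mul Complex.continuous_ofReal)
  have hFcont : Continuous fun η : ℝ => Complex.exp (-Complex.I * Ω * η) *
      ((∫ ξ in (0:ℝ)..η, Real.sin (Ω * ξ) / C ξ *
        Real.exp (-(1 / ε) * ∫ σ in ξ..η, 1 / θ σ) : ℝ) : ℂ) :=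
    hexpcont.mul (Complex.continuous_ofReal.comp hIcont)
  have hGcont' : Continuous fun η : ℝ => Complex.exp (-Complex.I * Ω * η) *
      ((∫ ξ in (0:ℝ)..η, Real.sin (Ω * ξ) / C ξ *
        Real.exp (-(η - ξ) / (ε * θ η)) : ℝ) : ℂ) :=
    hexpcont.mul (Complex.continuous_ofReal.comp hI2cont)
  set M : ℝ := L * ε ^ 2 * Mθ ^ 3 / mC with hMdef
  rw [hZ, hZ₁, ← mul_sub, ← intervalIntegral.integral_sub
    (hFcont.intervalIntegrable a b) (hGcont'.intervalIntegrable a b), norm_mul]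
  have hcabs : ‖(2 * Complex.I / (((b : ℂ) - a) * ε))‖ = 2 / ((b - a) * ε) := by
    have hc : ((b:ℂ) - a) = ((b - a : ℝ) : ℂ) := by push_cast; ring
    rw [hc, norm_div, norm_mul, norm_mul, Complex.norm_I, Complex.norm_real,
      Complex.norm_real, Complex.norm_two, Real.norm_eq_abs, Real.norm_eq_abs, abs_of_pos hba, abs_of_pos hε, mul_one]
  have hbound : ‖(∫ η in a..b,
      (Complex.exp (-Complex.I * Ω * η) *
        ((∫ ξ in (0:ℝ)..η, Real.sin (Ω * ξ) / C ξ *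
          Real.exp (-(1 / ε) * ∫ σ in ξ..η, 1 / θ σ) : ℝ) : ℂ) -
      Complex.exp (-Complex.I * Ω * η) *
        ((∫ ξ in (0:ℝ)..η, Real.sin (Ω * ξ) / C ξ *
          Real.exp (-(η - ξ) / (ε * θ η)) : ℝ) : ℂ)))‖ ≤ M * |b - a| := by
    apply intervalIntegral.norm_integral_le_of_norm_le_const
    intro η hη
    have hη0 : (0:ℝ) ≤ η := by
      rw [Set.uIoc_of_le hab.le] at hη
      exact ha.trans hη.1.le
    rw [← mul_sub, norm_mul]
    have habs1 : ‖Complex.exp (-Complex.I * Ω * η)‖ = 1 := by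
      rw [Complex.norm_exp]
      simp
    rw [habs1, one_mul, ← Complex.ofReal_sub, Complex.norm_real, Real.norm_eq_abs]
    exact SDaux_inner C θ hCcont hθC1 hCpos hθpos mC hmC hmC' Mθ hMθ L hL ε Ω hε η hη0
  calc ‖(2 * Complex.I / (((b : ℂ) - a) * ε))‖ * ‖_‖
      ≤ (2 / ((b - a) * ε)) * (M * |b - a|) := by
        rw [hcabs]
        exact mul_le_mul_of_nonneg_left hbound (by positivity)
    _ = 2 * ε * Mθ ^ 3 * L / mC := by
        rw [hMdef, abs_of_pos hba]
        field_simp
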